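/- Let x be a positive light-like vector and y a unit space-like vector with x∘y < 0, and set e^h = -x∘y. The curve γ(t) = e^{-h}·cosh t·x + e^{-t}·y satisfies γ(t)∘γ(t) = -1 and γ''(t) = γ(t) for all t, γ(0)∘y = 0 (so γ(0) lies on the polar hyperplane of y), and γ'(0)∘y = -1, so γ meets the polar hyperplane of y orthogonally. -/

import Mathlib

/-- The Lorentzian inner product on `ℝ^{n+1}`. -/
def lprod {n : ℕ} (x y : Fin (n + 1) → ℝ) : ℝ :=
  -(x 0 * y 0) + ∑ i : Fin n, x i.succ * y i.succ

lemma lprod_lin {n : ℕ} (x y z : Fin (n + 1) → ℝ) (a b : ℝ) :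
    lprod (a • x + b • y) z = a * lprod x z + b * lprod y z := by
  have key : ∀ i : Fin n, (a * x i.succ + b * y i.succ) * z i.succ
      = a * (x i.succ * z i.succ) + b * (y i.succ * z i.succ) := fun i => by ring
  simp only [lprod, Pi.add_apply, Pi.smul_apply, smul_eq_mul, key,
    Finset.sum_add_distrib, ← Finset.mul_sum]
  ring

lemma lprod_comm {n : ℕ} (x y : Fin (n + 1) → ℝ) : lprod x y = lprod y x := by
  simp only [lprod, mul_comm]

/-- The geodesic perpendicular to the polar hyperplane of `y` in the direction
of the ideal point of `x`. -/
theorem perpendicular_geodesic_to_polar {n : ℕ} (x y : Fin (n + 1) → ℝ)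
    (hxx : lprod x x = 0) (hx0 : 0 < x 0)
    (hyy : lprod y y = 1) (hxy : lprod x y < 0)
    (h : ℝ) (hh : Real.exp h = -lprod x y)
    (γ : ℝ → (Fin (n + 1) → ℝ))
    (hγ : ∀ t, γ t = (Real.exp (-h) * Real.cosh t) • x + Real.exp (-t) • y) :
    (∀ t, lprod (γ t) (γ t) = -1) ∧
    (∀ t, deriv (deriv γ) t = γ t) ∧
    lprod (γ 0) y = 0 ∧
    lprod (deriv γ 0) y = -1 := by
  have hγfun : γ = fun t => (Real.exp (-h) * Real.cosh t) • x + Real.exp (-t) • y :=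
    funext hγ
  have hA : lprod x y = -Real.exp h := by linarith
  have hxyl : ∀ a b : ℝ, lprod (a • x + b • y) (a • x + b • y)
      = a * a * lprod x x + (a * b + b * a) * lprod x y + b * b * lprod y y := by
    intro a b
    rw [lprod_lin]
    rw [lprod_comm x (a • x + b • y), lprod_comm y (a • x + b • y), lprod_lin, lprod_lin]
    rw [lprod_comm y x]
    ring
  have hd1 : ∀ t, HasDerivAt γ
      ((Real.exp (-h) * Real.sinh t) • x + (-Real.exp (-t)) • y) t := by
    intro t
    rw [hγfun]
    have h1 : HasDerivAt (fun t : ℝ => Real.exp (-h) * Real.cosh t)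
        (Real.exp (-h) * Real.sinh t) t :=
      (Real.hasDerivAt_cosh t).const_mul _
    have h2 : HasDerivAt (fun t : ℝ => Real.exp (-t)) (-Real.exp (-t)) t := by
      have := ((hasDerivAt_id t).neg).exp
      simpa using this
    exact (h1.smul_const x).add (h2.smul_const y)
  have hderiv : deriv γ = fun t =>
      (Real.exp (-h) * Real.sinh t) • x + (-Real.exp (-t)) • y :=
    funext fun t => (hd1 t).deriv
  have hd2 : ∀ t, HasDerivAt (deriv γ)
      ((Real.exp (-h) * Real.cosh t) • x + Real.exp (-t) • y) t := by
    intro t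
    rw [hderiv]
    have h1 : HasDerivAt (fun t : ℝ => Real.exp (-h) * Real.sinh t)
        (Real.exp (-h) * Real.cosh t) t :=
      (Real.hasDerivAt_sinh t).const_mul _
    have h2 : HasDerivAt (fun t : ℝ => -Real.exp (-t)) (Real.exp (-t)) t := by
      have := (((hasDerivAt_id t).neg).exp).fun_neg
      simpa using this
    exact (h1.smul_const x).add (h2.smul_const y)
  refine ⟨?_, ?_, ?_, ?_⟩
  · intro t
    rw [hγ t, hxyl, hxx, hyy, hA, Real.cosh_eq, Real.exp_neg, Real.exp_neg]
    have e1 := Real.exp_ne_zero h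
    have e2 := Real.exp_ne_zero t
    field_simp
    ring
  · intro t
    rw [(hd2 t).deriv, hγ t]
  · rw [hγ 0, lprod_lin, hyy, hA]
    simp [Real.exp_neg, Real.exp_ne_zero h]
  · rw [hderiv]
    simp only [Real.sinh_zero, mul_zero, Real.exp_zero]
    rw [lprod_lin, hyy]
    simp
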